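/- arXiv:2108.01134 — 2 statements merged into one kernel-verified Lean document; each statement's English description precedes it below -/
import Mathlib

section
/- The Gillies Covering CCR is AS rationalizable with Advantage(x,y,R|_{x,y}) = Margin(x,y) computed from the restricted profile, and Standard(x,y,R^{-x,y}) = 0 if every v ∉ {x,y} with v ≻ x (in R^{-x,y}) also has v ≻ y, and |V| otherwise. -/
/-- A profile assigns to each voter a transitive and complete preference relation. -/
structure Profile (V X : Type*) where
  rel : V → X → X → Prop
  total : ∀ i x y, rel i x y ∨ rel i y x
  trans : ∀ i x y z, rel i x y → rel i y z → rel i x z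

/-- A collective choice rule maps profiles to binary relations on candidates. -/
abbrev CCR (V X : Type*) := Profile V X → X → X → Prop

/-- Strict part of a relation. -/
def strictPref {X : Type*} (R : X → X → Prop) (x y : X) : Prop := R x y ∧ ¬ R y x

/-- The restriction of a profile to the pair {x,y}. -/
def Profile.restrict {V X : Type*} (R : Profile V X) (x y : X) : V → X → X → Prop :=
  fun i a b => (a = x ∨ a = y) ∧ (b = x ∨ b = y) ∧ R.rel i a b

/-- The preprofile obtained by removing the pairs ⟨x,y⟩ and ⟨y,x⟩ from every voter's relation. -/
def Profile.remove {V X : Type*} (R : Profile V X) (x y : X) : V → X → X → Prop :=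
  fun i a b => R.rel i a b ∧ ¬ ((a = x ∧ b = y) ∨ (a = y ∧ b = x))

/-- Majority margin of x over y in a preprofile. -/
noncomputable def marginOf {V X : Type*} (p : V → X → X → Prop) (x y : X) : ℤ :=
  (Nat.card {i : V // strictPref (p i) x y} : ℤ) -
    (Nat.card {i : V // strictPref (p i) y x} : ℤ)

/-- Majority preference: x is majority preferred to y. -/
noncomputable def majPref {V X : Type*} (R : Profile V X) (x y : X) : Prop :=
  0 < marginOf R.rel x y

/-- The strict Gillies covering relation. -/
noncomputable def Pcov {V X : Type*} (R : Profile V X) (x y : X) : Prop :=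
  majPref R x y ∧ ∀ v, majPref R v x → majPref R v y

/-- Covering indifference: x and y relate by majority preference to all candidates alike. -/
noncomputable def Icov {V X : Type*} (R : Profile V X) (x y : X) : Prop :=
  ∀ v, (majPref R v x ↔ majPref R v y) ∧ (majPref R x v ↔ majPref R y v)

/-- The Gillies Covering CCR. -/
noncomputable def fcov {V X : Type*} : CCR V X :=
  fun R x y => Pcov R x y ∨ Icov R x y

open scoped Classical in
/-- The standard function for the Gillies Covering CCR. -/
noncomputable def gilliesStd {V X : Type*} (x y : X) (T : V → X → X → Prop) : ℤ :=
  if ∀ v : X, v ≠ x → v ≠ y → 0 < marginOf T v x → 0 < marginOf T v y then 0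
  else (Nat.card V : ℤ)

section Aux
variable {V X : Type*}

lemma card_congr' (p q : V → Prop) (h : ∀ i, p i ↔ q i) :
    Nat.card {i // p i} = Nat.card {i // q i} := by
  have : p = q := funext fun i => propext (h i)
  rw [this]

lemma margin_congr (p q : V → X → X → Prop) (a b : X)
    (h1 : ∀ i, strictPref (p i) a b ↔ strictPref (q i) a b)
    (h2 : ∀ i, strictPref (p i) b a ↔ strictPref (q i) b a) :
    marginOf p a b = marginOf q a b := by
  unfold marginOf
  rw [card_congr' _ _ h1, card_congr' _ _ h2]

lemma margin_antisym (p : V → X → X → Prop) (a b : X) :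
    marginOf p a b = - marginOf p b a := by
  unfold marginOf; ring

lemma margin_self (p : V → X → X → Prop) (a : X) : marginOf p a a = 0 := by
  unfold marginOf; ring

lemma restrict_margin (R : Profile V X) (x y : X) :
    marginOf (R.restrict x y) x y = marginOf R.rel x y := by
  apply margin_congr <;> intro i <;> simp [strictPref, Profile.restrict]

lemma remove_margin_left (R : Profile V X) (x y v : X) (hx : v ≠ x) (hy : v ≠ y) :
    marginOf (R.remove x y) v x = marginOf R.rel v x := by
  apply margin_congr <;> intro i <;> simp [strictPref, Profile.remove, hx, hy]

lemma remove_margin_right (R : Profile V X) (x y v : X) (hx : v ≠ x) (hy : v ≠ y) :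
    marginOf (R.remove x y) v y = marginOf R.rel v y := by
  apply margin_congr <;> intro i <;> simp [strictPref, Profile.remove, hx, hy]

lemma margin_le_card [Finite V] (p : V → X → X → Prop) (a b : X) :
    marginOf p a b ≤ (Nat.card V : ℤ) := by
  unfold marginOf
  have h1 : Nat.card {i : V // strictPref (p i) a b} ≤ Nat.card V :=
    Nat.card_le_card_of_injective Subtype.val Subtype.val_injective
  have h2 : (0 : ℤ) ≤ (Nat.card {i : V // strictPref (p i) b a} : ℤ) := by positivity
  omega

lemma Icov_symm (R : Profile V X) (x y : X) (h : Icov R x y) : Icov R y x :=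
  fun v => ⟨(h v).1.symm, (h v).2.symm⟩

lemma strict_fcov_iff_Pcov (R : Profile V X) (x y : X) :
    strictPref (fcov R) x y ↔ Pcov R x y := by
  constructor
  · rintro ⟨hf, hnf⟩
    rcases hf with h | h
    · exact h
    · exact absurd (Or.inr (Icov_symm R x y h)) hnf
  · intro h
    refine ⟨Or.inl h, ?_⟩
    rintro (hp | hi)
    · have h1 := h.1
      have h2 := hp.1
      unfold majPref at h1 h2
      rw [margin_antisym] at h2
      omega
    · have := (Icov_symm R y x hi y).2
      have h1 := h.1
      have h0 : ¬ majPref R y y := by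
        unfold majPref; rw [margin_self]; omega
      exact h0 (this.mp h1)

end Aux

/-- The Gillies Covering CCR is AS rationalizable over (ℤ,+,≤) with advantage the margin
computed from the restricted profile and the indicated standard function. -/
theorem gillies_as_rationalizable {V X : Type*} [Finite V] [Finite X] :
    (∀ (x y : X) (R : Profile V X),
        marginOf (R.restrict x y) x y = - marginOf (R.restrict x y) y x) ∧
    (∀ (x y : X) (R : Profile V X), 0 ≤ gilliesStd x y (R.remove x y)) ∧
    (∀ (x y : X) (R : Profile V X),
        strictPref (fcov R) x y ↔
          gilliesStd x y (R.remove x y) < marginOf (R.restrict x y) x y) := by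
  classical
  refine ⟨fun x y R => margin_antisym _ x y, ?_, ?_⟩
  · intro x y R
    unfold gilliesStd
    split <;> positivity
  · intro x y R
    rw [strict_fcov_iff_Pcov, restrict_margin]
    unfold gilliesStd
    split
    · rename_i hC
      constructor
      · intro h; exact h.1
      · intro hm
        refine ⟨hm, ?_⟩
        intro v hv
        by_cases hx : v = x
        · subst hx
          unfold majPref at hv
          rw [margin_self] at hv
          omega
        by_cases hy : v = y
        · subst hy
          unfold majPref at hv ⊢
          rw [margin_antisym] at hv
          omega
        · have := hC v hx hy
          rw [remove_margin_left R x y v hx hy, remove_margin_right R x y v hx hy] at this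
          exact this hv
    · rename_i hC
      push_neg at hC
      obtain ⟨v, hx, hy, hvx, hvy⟩ := hC
      rw [remove_margin_left R x y v hx hy] at hvx
      rw [remove_margin_right R x y v hx hy] at hvy
      constructor
      · intro h
        have := h.2 v hvx
        unfold majPref at this
        omega
      · intro h
        exact absurd (margin_le_card R.rel x y) (by omega)
end

section
/- For a Split Cycle CCR (equivalently, assuming the beat-path characterization), the strict social preference relation P(f(R)) is acyclic for every profile R. -/
/-- A majority cycle (represented by its list of distinct vertices, with edges wrapping
around) for a margin function M. -/
def IsMajCycle {X : Type*} (M : X → X → ℤ) (l : List X) : Prop :=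
  2 ≤ l.length ∧ l.Nodup ∧ ∀ p ∈ l.zip (l.rotate 1), 0 < M p.1 p.2

/-- The splitting number of a majority cycle: the smallest margin along the cycle. -/
noncomputable def cycleSplit {X : Type*} (M : X → X → ℤ) (l : List X) : ℤ :=
  (((l.zip (l.rotate 1)).map (fun p => M p.1 p.2)).min?).getD 0

/-- A Split Cycle CCR: x strictly socially preferred to y iff the margin of x over y is
positive and exceeds the splitting number of every majority cycle containing x and y. -/
def IsSplitCycleCCR {V X : Type*} (f : CCR V X) : Prop :=
  ∀ (R : Profile V X) (x y : X),
    strictPref (f R) x y ↔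
      (marginOf R.rel y x < marginOf R.rel x y ∧
        ∀ l : List X, IsMajCycle (marginOf R.rel) l → x ∈ l → y ∈ l →
          cycleSplit (marginOf R.rel) l < marginOf R.rel x y)

/-- Margins are antisymmetric. -/
lemma marginOf_antisymm {V X : Type*} (p : V → X → X → Prop) (x y : X) :
    marginOf p x y = - marginOf p y x := by
  unfold marginOf; ring

/-- Every edge of a chain satisfies the relation, in zip form. -/
lemma chain_zip_aux {X : Type*} {P : X → X → Prop} :
    ∀ {a : X} {l : List X}, List.Chain P a l → ∀ p ∈ (a :: l).zip l, P p.1 p.2 := by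
  intro a l h
  induction l generalizing a with
  | nil => simp
  | cons b l IH =>
    intro p hp
    rw [List.zip_cons_cons] at hp
    have h2 : P a b ∧ List.Chain P b l := List.isChain_cons_cons.mp h
    rcases List.mem_cons.mp hp with h' | h'
    · subst h'; exact h2.1
    · exact IH h2.2 p h'

/-- Any non-nodup list splits around a duplicated element. -/
lemma nodup_or_split {X : Type*} :
    ∀ l : List X, l.Nodup ∨ ∃ (u : List X) (b : X) (v : List X) (w : List X),
      l = u ++ b :: v ++ b :: w := by
  intro l
  induction l with
  | nil => exact Or.inl List.nodup_nil
  | cons a l IH =>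
    by_cases ha : a ∈ l
    · obtain ⟨v, w, rfl⟩ := List.append_of_mem ha
      exact Or.inr ⟨[], a, v, w, rfl⟩
    · rcases IH with h | ⟨u, b, v, w, rfl⟩
      · exact Or.inl (List.nodup_cons.mpr ⟨ha, h⟩)
      · exact Or.inr ⟨a :: u, b, v, w, rfl⟩

/-- The key lemma: no cyclic chains of any length for a Split Cycle strict preference. -/
lemma no_cycle_aux {V X : Type*} [Finite V] [Finite X] (f : CCR V X)
    (hf : IsSplitCycleCCR f) (R : Profile V X) :
    ∀ (n : ℕ) (a : X) (t : List X), t.length ≤ n →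
      ¬ List.Chain (strictPref (f R)) a (t ++ [a]) := by
  set P := strictPref (f R) with hP
  set M := marginOf R.rel with hM
  have hirr : ∀ u, ¬ P u u := fun u h => h.2 h.1
  have hpos : ∀ u v, P u v → 0 < M u v := by
    intro u v h
    have h1 := ((hf R u v).mp h).1
    have h2 := marginOf_antisymm R.rel u v
    rw [← hM] at h1 h2
    omega
  intro n
  induction n with
  | zero =>
    intro a t ht hc
    have : t = [] := List.length_eq_zero_iff.mp (Nat.le_zero.mp ht)
    subst this
    exact hirr a (List.isChain_pair.mp hc)
  | succ n IH =>
    intro a t ht hc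
    rcases nodup_or_split (a :: t) with hnd | ⟨u, b, v, w, hsplit⟩
    · -- the cycle a :: t is simple: derive the margin contradiction
      have htne : t ≠ [] := by
        rintro rfl
        exact hirr a (List.isChain_pair.mp hc)
      set c : List X := a :: t with hc'
      have hrot : c.rotate 1 = t ++ [a] := by
        rw [hc', List.rotate_cons_succ, List.rotate_zero]
      have hzip : c.zip (c.rotate 1) ++ ([a].zip ([] : List X))
          = (a :: (t ++ [a])).zip (t ++ [a]) := by
        rw [hrot, hc']
        have h1 : (a :: (t ++ [a])) = (a :: t) ++ [a] := by simp
        rw [h1, ← List.zip_append (by simp)]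
        simp
      have hedge : ∀ p ∈ c.zip (c.rotate 1), P p.1 p.2 := by
        intro p hp
        refine chain_zip_aux hc p ?_
        rw [← hzip]
        exact List.mem_append_left _ hp
      have hmaj : IsMajCycle M c := by
        refine ⟨?_, hnd, fun p hp => hpos p.1 p.2 (hedge p hp)⟩
        rw [hc']
        have : t.length ≠ 0 := fun h => htne (List.length_eq_zero_iff.mp h)
        simp only [List.length_cons]
        omega
      have hzne : c.zip (c.rotate 1) ≠ [] := by
        have hl : (c.zip (c.rotate 1)).length = c.length := by
          rw [List.length_zip, List.length_rotate, Nat.min_self]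
        intro h
        rw [h] at hl
        simp [hc'] at hl
      set L := (c.zip (c.rotate 1)).map (fun p => M p.1 p.2) with hL
      have hLne : L ≠ [] := by
        rw [hL]; exact fun h => hzne (List.map_eq_nil_iff.mp h)
      obtain ⟨m, hm⟩ : ∃ m, L.min? = some m := by
        cases h : L.min? with
        | none => exact absurd (List.min?_eq_none_iff.mp h) hLne
        | some m => exact ⟨m, rfl⟩
      have hmmem : m ∈ L := List.min?_mem hm
      obtain ⟨p, hp, hpm⟩ := List.mem_map.mp hmmem
      have hPp : P p.1 p.2 := hedge p hp
      have hmem1 : p.1 ∈ c := (List.of_mem_zip hp).1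
      have hmem2 : p.2 ∈ c := List.mem_rotate.mp (List.of_mem_zip hp).2
      have hlt := ((hf R p.1 p.2).mp hPp).2 c hmaj hmem1 hmem2
      have hcs : cycleSplit M c = m := by
        unfold cycleSplit
        rw [← hL, hm]
        rfl
      rw [hcs, ← hM, hpm] at hlt
      exact lt_irrefl m hlt
    · -- shorten the cycle at the duplicated element b
      have hbig : List.Chain' P (a :: (t ++ [a])) := hc
      have hinfix : (b :: (v ++ [b])) <:+: (a :: (t ++ [a])) := by
        refine ⟨u, w ++ [a], ?_⟩
        have h1 : a :: (t ++ [a]) = (a :: t) ++ [a] := by simp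
        rw [h1, hsplit]
        simp
      have hsmall : List.Chain' P (b :: (v ++ [b])) := hbig.infix hinfix
      have hlen : v.length ≤ n := by
        have := congrArg List.length hsplit
        simp only [List.length_cons, List.length_append] at this
        omega
      exact IH b v hlen hsmall

/-- The strict social preference relation of a Split Cycle CCR is acyclic. -/
theorem splitcycle_acyclic {V X : Type*} [Finite V] [Finite X] (f : CCR V X)
    (hf : IsSplitCycleCCR f) :
    ∀ (R : Profile V X) (x : X), ¬ Relation.TransGen (strictPref (f R)) x x := by
  intro R x hx
  have hchain : ∃ t : List X, List.Chain (strictPref (f R)) x (t ++ [x]) := by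
    have hgen : ∀ y : X, Relation.TransGen (strictPref (f R)) y x →
        ∃ t : List X, List.Chain (strictPref (f R)) y (t ++ [x]) := by
      intro y hy
      induction hy using Relation.TransGen.head_induction_on with
      | single h => exact ⟨[], List.isChain_pair.mpr h⟩
      | head h _ IH =>
        obtain ⟨t, ht⟩ := IH
        exact ⟨_ :: t, List.Chain.cons h ht⟩
    exact hgen x hx
  obtain ⟨t, ht⟩ := hchain
  exact no_cycle_aux f hf R t.length x t le_rfl ht
end
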